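/- Let V be a finite Borel measure on (0,∞) and let ε, c₁, c₂ be constants in (0, 𝓛_V(0)) with c₁ < c₂. Then 𝓛_V(T_V(ε)) = ε, and for all r ≥ 0 and s > 0 one has 𝓛_V(T_V(ε) + r + s) ≤ c₁ + c₂·e^{−(T_V(ε)+r+s)·λ_V(c₁)} + ε·(T_V(ε)+r+s) / ((T_V(ε)+s)·e^{r·λ_V(c₂)}). -/

import Mathlib

open MeasureTheory Filter Set Topology

/-- The Laplace transform `𝓛_V(t) = ∫_{(0,∞)} e^{-tλ} dV(λ)` of a (finite Borel) measure `V`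
on `(0,∞)`. -/
noncomputable def lap (V : Measure ℝ) (t : ℝ) : ℝ :=
  ∫ x in Ioi (0 : ℝ), Real.exp (-t * x) ∂V

/-- `V(λ) = V((0,λ])`, the nondecreasing right-continuous function associated to `V`. -/
noncomputable def cdfV (V : Measure ℝ) (l : ℝ) : ℝ :=
  (V (Ioc 0 l)).toReal

/-- The mixing time `T_V(ε) = min{t ≥ 0 : 𝓛_V(t) ≤ ε}`. -/
noncomputable def TmixV (V : Measure ℝ) (ε : ℝ) : ℝ :=
  sInf {t : ℝ | 0 ≤ t ∧ lap V t ≤ ε}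

/-- `λ_V(c) = inf{λ > 0 : V(λ) > c}`. -/
noncomputable def lamV (V : Measure ℝ) (c : ℝ) : ℝ :=
  sInf {l : ℝ | 0 < l ∧ c < cdfV V l}

/-- `τ_V(c) = sup_{λ ≥ λ_V(c)} log(1 + V(λ))/λ`. -/
noncomputable def tauV (V : Measure ℝ) (c : ℝ) : ℝ :=
  sSup ((fun l => Real.log (1 + cdfV V l) / l) '' Ici (lamV V c))

/-- `t` is a cutoff time for the sequence of Laplace transforms `(𝓛_{V_n})` (in the regime
`𝓛_{V_n}(0) → ∞`): `𝓛_{V_n}(a t_n) → 0` for `a > 1` and `𝓛_{V_n}(a t_n) → ∞` for `0 < a < 1`. -/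
def IsLapCutoffTime (V : ℕ → Measure ℝ) (t : ℕ → ℝ) : Prop :=
  (∀ᶠ n in atTop, 0 < t n) ∧
    (∀ a : ℝ, 1 < a → Tendsto (fun n => lap (V n) (a * t n)) atTop (𝓝 0)) ∧
    (∀ a : ℝ, a ∈ Ioo (0 : ℝ) 1 → Tendsto (fun n => lap (V n) (a * t n)) atTop atTop)

/-- The sequence of Laplace transforms `(𝓛_{V_n})` has a cutoff. -/
def LapCutoff (V : ℕ → Measure ℝ) : Prop :=
  ∃ t : ℕ → ℝ, IsLapCutoffTime V t

section Helpers

variable (V : Measure ℝ) [IsFiniteMeasure V]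

lemma exp_aesm (t : ℝ) :
    AEStronglyMeasurable (fun x : ℝ => Real.exp (-t * x)) (V.restrict (Ioi 0)) :=
  (Real.continuous_exp.comp (continuous_const.mul continuous_id)).aestronglyMeasurable

lemma lap_integrableOn {t : ℝ} (ht : 0 ≤ t) :
    IntegrableOn (fun x : ℝ => Real.exp (-t * x)) (Ioi 0) V := by
  refine Integrable.mono' (integrable_const 1) (exp_aesm V t) ?_
  filter_upwards [ae_restrict_mem measurableSet_Ioi] with x hx
  rw [Real.norm_eq_abs, abs_of_pos (Real.exp_pos _), Real.exp_le_one_iff]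
  nlinarith [mem_Ioi.mp hx]

lemma lap_zero_eq : lap V 0 = (V (Ioi 0)).toReal := by
  simp [lap]; rfl

lemma lap_contOn : ContinuousOn (lap V) (Ici 0) := by
  intro t₀ ht₀
  refine continuousWithinAt_of_dominated (bound := fun _ => (1 : ℝ))
    (Eventually.of_forall fun t => exp_aesm V t) ?_ (integrable_const 1) ?_
  · filter_upwards [self_mem_nhdsWithin] with t ht
    filter_upwards [ae_restrict_mem measurableSet_Ioi] with x hx
    rw [Real.norm_eq_abs, abs_of_pos (Real.exp_pos _), Real.exp_le_one_iff]
    nlinarith [mem_Ioi.mp hx, mem_Ici.mp ht]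
  · filter_upwards [] with x
    exact (Real.continuous_exp.comp
      ((continuous_id.neg).mul continuous_const)).continuousWithinAt

lemma lap_tendsto : Tendsto (lap V) atTop (𝓝 0) := by
  have h0 : (0 : ℝ) = ∫ x in Ioi (0 : ℝ), (0 : ℝ) ∂V := by simp
  rw [h0]
  refine tendsto_integral_filter_of_dominated_convergence (fun _ => (1 : ℝ))
    (Eventually.of_forall fun t => exp_aesm V t) ?_ (integrable_const 1) ?_
  · filter_upwards [eventually_ge_atTop (0 : ℝ)] with t ht
    filter_upwards [ae_restrict_mem measurableSet_Ioi] with x hx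
    rw [Real.norm_eq_abs, abs_of_pos (Real.exp_pos _), Real.exp_le_one_iff]
    nlinarith [mem_Ioi.mp hx]
  · filter_upwards [ae_restrict_mem measurableSet_Ioi] with x hx
    have hbot : Tendsto (fun t : ℝ => -t * x) atTop atBot := by
      have h1 : Tendsto (fun t : ℝ => t * x) atTop atTop :=
        tendsto_id.atTop_mul_const (mem_Ioi.mp hx)
      have heq : (fun t : ℝ => -t * x) = (fun y : ℝ => -y) ∘ fun t : ℝ => t * x := by
        ext t; simp
      rw [heq]
      exact tendsto_neg_atTop_atBot.comp h1
    exact Real.tendsto_exp_atBot.comp hbot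

lemma exists_cdf_gt {c : ℝ} (hc : c < lap V 0) : ∃ l : ℝ, 0 < l ∧ c < cdfV V l := by
  have hmono : Monotone (fun n : ℕ => Ioc (0 : ℝ) n) := fun m n h =>
    Ioc_subset_Ioc_right (by exact_mod_cast h)
  have hU : ⋃ n : ℕ, Ioc (0 : ℝ) n = Ioi 0 := by
    ext x
    simp only [mem_iUnion, mem_Ioc, mem_Ioi]
    constructor
    · rintro ⟨n, h1, _⟩; exact h1
    · intro hx
      obtain ⟨n, hn⟩ := exists_nat_ge x
      exact ⟨n, hx, hn⟩
  have h1 : Tendsto (fun n : ℕ => V (Ioc 0 (n : ℝ))) atTop (𝓝 (V (Ioi 0))) := by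
    simpa [hU, Function.comp_def] using tendsto_measure_iUnion_atTop (μ := V) hmono
  have h2 : Tendsto (fun n : ℕ => cdfV V n) atTop (𝓝 (lap V 0)) := by
    rw [lap_zero_eq]
    exact (ENNReal.tendsto_toReal (measure_ne_top V _)).comp h1
  obtain ⟨n, hn1, hn2⟩ := ((h2.eventually_const_lt hc).and (eventually_gt_atTop 0)).exists
  exact ⟨n, by exact_mod_cast hn2, hn1⟩

lemma lamV_nonneg (c : ℝ) : 0 ≤ lamV V c :=
  Real.sInf_nonneg fun l hl => hl.1.le

lemma measure_Ioo_lamV {c : ℝ} (hc : 0 ≤ c) :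
    V (Ioo 0 (lamV V c)) ≤ ENNReal.ofReal c := by
  set L := lamV V c with hL
  have key : ∀ l : ℝ, l < L → V (Ioc 0 l) ≤ ENNReal.ofReal c := by
    intro l hl
    rcases le_or_gt l 0 with h | h
    · simp [Set.Ioc_eq_empty (not_lt.mpr h)]
    · have hnot : l ∉ {l : ℝ | 0 < l ∧ c < cdfV V l} :=
        notMem_of_lt_csInf hl ⟨0, fun x hx => hx.1.le⟩
      have hle : cdfV V l ≤ c := by
        by_contra hcon
        push_neg at hcon
        exact hnot ⟨h, hcon⟩
      calc V (Ioc 0 l) = ENNReal.ofReal (cdfV V l) :=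
            (ENNReal.ofReal_toReal (measure_ne_top V _)).symm
        _ ≤ ENNReal.ofReal c := ENNReal.ofReal_le_ofReal hle
  have hmono : Monotone (fun n : ℕ => Ioc (0 : ℝ) (L - 1 / (n + 1))) := by
    intro m n h
    apply Ioc_subset_Ioc_right
    have : (1 : ℝ) / (n + 1) ≤ 1 / (m + 1) := by
      apply one_div_le_one_div_of_le (by positivity)
      have := (Nat.cast_le (α := ℝ)).mpr h; linarith
    linarith
  have hU : Ioo (0 : ℝ) L ⊆ ⋃ n : ℕ, Ioc (0 : ℝ) (L - 1 / (n + 1)) := by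
    intro x hx
    obtain ⟨n, hn⟩ := exists_nat_one_div_lt (sub_pos.mpr hx.2)
    exact mem_iUnion.mpr ⟨n, hx.1, by linarith⟩
  calc V (Ioo 0 L) ≤ V (⋃ n : ℕ, Ioc (0 : ℝ) (L - 1 / (n + 1))) := measure_mono hU
    _ = ⨆ n : ℕ, V (Ioc (0 : ℝ) (L - 1 / (n + 1))) := hmono.measure_iUnion
    _ ≤ ENNReal.ofReal c := by
        refine iSup_le fun n => key _ ?_
        have : (0 : ℝ) < 1 / ((n : ℝ) + 1) := by positivity
        linarith

end Helpers

set_option maxHeartbeats 1000000 in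
theorem stmt_8 (V : Measure ℝ) [IsFiniteMeasure V] (hsupp : V (Iic 0) = 0)
    (ε c₁ c₂ : ℝ) (hε : 0 < ε) (hεlt : ε < lap V 0)
    (hc₁ : 0 < c₁) (hc₁₂ : c₁ < c₂) (hc₂lt : c₂ < lap V 0) :
    lap V (TmixV V ε) = ε ∧
      ∀ r ≥ (0 : ℝ), ∀ s > (0 : ℝ),
        lap V (TmixV V ε + r + s) ≤
          c₁ + c₂ * Real.exp (-(TmixV V ε + r + s) * lamV V c₁) +
            ε * (TmixV V ε + r + s) /
              ((TmixV V ε + s) * Real.exp (r * lamV V c₂)) := by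
  classical
  set S : Set ℝ := {t : ℝ | 0 ≤ t ∧ lap V t ≤ ε} with hS
  have hSbdd : BddBelow S := ⟨0, fun t ht => ht.1⟩
  have hSne : S.Nonempty := by
    obtain ⟨t0, ht1, ht2⟩ :=
      (((lap_tendsto V).eventually (eventually_le_nhds hε)).and
        (eventually_ge_atTop (0 : ℝ))).exists
    exact ⟨t0, ht2, ht1⟩
  have hSclosed : IsClosed S := by
    have hSeq : S = Ici 0 ∩ lap V ⁻¹' Iic ε := by
      ext t
      simp [hS, Set.mem_inter_iff, Set.mem_preimage]
    rw [hSeq]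
    exact (lap_contOn V).preimage_isClosed_of_isClosed isClosed_Ici isClosed_Iic
  have hTS : TmixV V ε = sInf S := by rw [hS]; rfl
  have hTmem : TmixV V ε ∈ S := by rw [hTS]; exact hSclosed.csInf_mem hSne hSbdd
  set T := TmixV V ε with hTdef
  have hT0 : 0 ≤ T := hTmem.1
  have hle : lap V T ≤ ε := hTmem.2
  have hlapT : lap V T = ε := by
    refine le_antisymm hle ?_
    by_contra h
    push_neg at h
    have hTpos : 0 < T := by
      rcases hT0.lt_or_eq with h' | h'
      · exact h'
      · rw [← h'] at h; linarith
    have hca : ContinuousAt (lap V) T :=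
      (lap_contOn V T hT0).continuousAt (Ici_mem_nhds hTpos)
    have h1 : ∀ᶠ t in 𝓝 T, lap V t < ε := hca.eventually_lt_const h
    have h2 : ∀ᶠ t in 𝓝 T, 0 < t := eventually_gt_nhds hTpos
    have h3 : ∀ᶠ t in 𝓝[<] T, lap V t < ε ∧ 0 < t :=
      (h1.and h2).filter_mono nhdsWithin_le_nhds
    obtain ⟨t, ⟨hlt, htpos⟩, htT⟩ := (h3.and self_mem_nhdsWithin).exists
    have hTS2 : TmixV V ε = sInf S := hTS
    have : T ≤ t := by rw [hTdef, hTS2]; exact csInf_le hSbdd ⟨htpos.le, hlt.le⟩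
    exact absurd this (not_le.mpr htT)
  refine ⟨hlapT, fun r hr s hs => ?_⟩
  set l₁ := lamV V c₁ with hl₁def
  set l₂ := lamV V c₂ with hl₂def
  have hl₁0 : 0 ≤ l₁ := lamV_nonneg V c₁
  have hl₂0 : 0 ≤ l₂ := lamV_nonneg V c₂
  have hne₂ : {l : ℝ | 0 < l ∧ c₂ < cdfV V l}.Nonempty := exists_cdf_gt V hc₂lt
  have hl₁₂ : l₁ ≤ l₂ :=
    csInf_le_csInf ⟨0, fun x hx => hx.1.le⟩ hne₂ fun l hl => ⟨hl.1, hc₁₂.trans hl.2⟩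
  set t := T + r + s with htdef
  have ht0 : 0 ≤ t := by simp only [htdef]; linarith
  set A : Set ℝ := Ioo 0 l₁ with hAdef
  set B : Set ℝ := Ico l₁ l₂ ∩ Ioi 0 with hBdef
  set C : Set ℝ := Ici l₂ ∩ Ioi 0 with hCdef
  have hAsub : A ⊆ Ioi 0 := fun x hx => hx.1
  have hBsub : B ⊆ Ioi 0 := fun x hx => hx.2
  have hCsub : C ⊆ Ioi 0 := fun x hx => hx.2
  have hInt : ∀ (u : ℝ), 0 ≤ u → ∀ (D : Set ℝ), D ⊆ Ioi 0 →
      IntegrableOn (fun x : ℝ => Real.exp (-u * x)) D V := fun u hu D hD =>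
    (lap_integrableOn V hu).mono_set hD
  have hmeasA : MeasurableSet A := measurableSet_Ioo
  have hmeasB : MeasurableSet B := (measurableSet_Ico.inter measurableSet_Ioi)
  have hmeasC : MeasurableSet C := (measurableSet_Ici.inter measurableSet_Ioi)
  -- split the integral
  have hconst : ∀ D : Set ℝ, IntegrableOn (fun _ : ℝ => (1 : ℝ)) D V :=
    fun D => integrableOn_const (measure_lt_top V D).ne
  have hsplit2 : Ioo (0 : ℝ) l₂ = A ∪ B := by
    ext x
    simp only [hAdef, hBdef, mem_Ioo, mem_union, mem_inter_iff, mem_Ico, mem_Ioi]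
    constructor
    · rintro ⟨h1, h2⟩
      rcases lt_or_ge x l₁ with h | h
      · exact Or.inl ⟨h1, h⟩
      · exact Or.inr ⟨⟨h, h2⟩, h1⟩
    · rintro (⟨h1, h2⟩ | ⟨⟨h1, h2⟩, h3⟩)
      · exact ⟨h1, lt_of_lt_of_le h2 hl₁₂⟩
      · exact ⟨h3, h2⟩
  have hsplit1 : Ioi (0 : ℝ) = Ioo 0 l₂ ∪ C := by
    ext x
    simp only [hCdef, mem_Ioi, mem_Ioo, mem_union, mem_inter_iff, mem_Ici]
    constructor
    · intro hx
      rcases lt_or_ge x l₂ with h | h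
      · exact Or.inl ⟨hx, h⟩
      · exact Or.inr ⟨h, hx⟩
    · rintro (⟨h1, _⟩ | ⟨_, h2⟩)
      · exact h1
      · exact h2
  have hdisj2 : Disjoint A B := by
    rw [Set.disjoint_left]
    rintro x ⟨_, h2⟩ ⟨⟨h3, _⟩, _⟩
    exact absurd h3 (not_le.mpr h2)
  have hdisj1 : Disjoint (Ioo (0 : ℝ) l₂) C := by
    rw [Set.disjoint_left]
    rintro x ⟨_, h2⟩ ⟨h3, _⟩
    exact absurd h3 (not_le.mpr h2)
  have hIoosub : Ioo (0 : ℝ) l₂ ⊆ Ioi 0 := fun x hx => hx.1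
  have hiq : lap V t = (∫ x in A, Real.exp (-t * x) ∂V) +
      (∫ x in B, Real.exp (-t * x) ∂V) + (∫ x in C, Real.exp (-t * x) ∂V) := by
    rw [lap, hsplit1, setIntegral_union hdisj1 hmeasC (hInt t ht0 _ hIoosub)
      (hInt t ht0 _ hCsub), hsplit2, setIntegral_union hdisj2 hmeasB
      (hInt t ht0 _ hAsub) (hInt t ht0 _ hBsub)]
  -- bound on A
  have bA : (∫ x in A, Real.exp (-t * x) ∂V) ≤ c₁ := by
    calc (∫ x in A, Real.exp (-t * x) ∂V) ≤ ∫ _x in A, (1 : ℝ) ∂V := by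
          refine setIntegral_mono_on (hInt t ht0 _ hAsub) (hconst A) hmeasA fun x hx => ?_
          rw [Real.exp_le_one_iff]
          nlinarith [hx.1]
      _ = (V A).toReal := by simp; rfl
      _ ≤ c₁ := ENNReal.toReal_le_of_le_ofReal hc₁.le (measure_Ioo_lamV V hc₁.le)
  -- bound on B
  have hc₂0 : (0 : ℝ) ≤ c₂ := le_of_lt (hc₁.trans hc₁₂)
  have hVB : (V B).toReal ≤ c₂ := by
    refine ENNReal.toReal_le_of_le_ofReal hc₂0 ?_
    refine le_trans (measure_mono ?_) (measure_Ioo_lamV V hc₂0)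
    rintro x ⟨⟨_, h2⟩, h3⟩
    exact ⟨h3, h2⟩
  have bB : (∫ x in B, Real.exp (-t * x) ∂V) ≤ c₂ * Real.exp (-t * l₁) := by
    calc (∫ x in B, Real.exp (-t * x) ∂V)
        ≤ ∫ _x in B, Real.exp (-t * l₁) ∂V := by
          refine setIntegral_mono_on (hInt t ht0 _ hBsub)
            (integrableOn_const (measure_lt_top V B).ne) hmeasB fun x hx =>
            Real.exp_le_exp.mpr (by nlinarith [hx.1.1])
      _ = (V B).toReal * Real.exp (-t * l₁) := by
          rw [setIntegral_const, smul_eq_mul]; rfl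
      _ ≤ c₂ * Real.exp (-t * l₁) :=
          mul_le_mul_of_nonneg_right hVB (Real.exp_pos _).le
  -- bound on C
  have bC : (∫ x in C, Real.exp (-t * x) ∂V) ≤ Real.exp (-(r * l₂)) * ε := by
    have hptw : ∀ x ∈ C, Real.exp (-t * x) ≤
        Real.exp (-(r * l₂)) * Real.exp (-T * x) := by
      rintro x ⟨hx1, hx2⟩
      have hx2' : (0 : ℝ) < x := hx2
      have hxl : l₂ ≤ x := hx1
      have heq : -t * x = (-r * x) + (-(T + s) * x) := by rw [htdef]; ring
      rw [heq, Real.exp_add]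
      exact mul_le_mul (Real.exp_le_exp.mpr (by nlinarith))
        (Real.exp_le_exp.mpr (by nlinarith)) (Real.exp_pos _).le (Real.exp_pos _).le
    calc (∫ x in C, Real.exp (-t * x) ∂V)
        ≤ ∫ x in C, Real.exp (-(r * l₂)) * Real.exp (-T * x) ∂V := by
          refine setIntegral_mono_on (hInt t ht0 _ hCsub) ?_ hmeasC hptw
          exact ((hInt T hT0 _ hCsub).const_mul _)
      _ = Real.exp (-(r * l₂)) * ∫ x in C, Real.exp (-T * x) ∂V := by
          rw [integral_const_mul]
      _ ≤ Real.exp (-(r * l₂)) * ∫ x in Ioi (0 : ℝ), Real.exp (-T * x) ∂V := by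
          refine mul_le_mul_of_nonneg_left ?_ (Real.exp_pos _).le
          refine setIntegral_mono_set (lap_integrableOn V hT0) ?_
            (HasSubset.Subset.eventuallyLE hCsub)
          filter_upwards [] with x
          exact (Real.exp_pos _).le
      _ = Real.exp (-(r * l₂)) * ε := by rw [← lap, hlapT]
  -- combine
  have hTs : (0 : ℝ) < T + s := by linarith
  have hfinal : Real.exp (-(r * l₂)) * ε ≤
      ε * t / ((T + s) * Real.exp (r * l₂)) := by
    have hE : (0 : ℝ) < Real.exp (r * l₂) := Real.exp_pos _
    rw [Real.exp_neg, inv_mul_eq_div, div_le_div_iff₀ hE (by positivity)]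
    have hts : T + s ≤ t := by rw [htdef]; linarith
    nlinarith [mul_nonneg (mul_nonneg hε.le (sub_nonneg.mpr hts)) hE.le]
  calc lap V t = (∫ x in A, Real.exp (-t * x) ∂V) +
      (∫ x in B, Real.exp (-t * x) ∂V) + (∫ x in C, Real.exp (-t * x) ∂V) := hiq
    _ ≤ c₁ + c₂ * Real.exp (-t * l₁) + Real.exp (-(r * l₂)) * ε :=
        add_le_add (add_le_add bA bB) bC
    _ ≤ c₁ + c₂ * Real.exp (-t * l₁) + ε * t / ((T + s) * Real.exp (r * l₂)) := by
        linarith [hfinal]
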